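/- Let I be a finite index set, (r_i)_{i∈I} a family of nonzero integers, and k an integer. Define the Boolean function f : (I → Bool) → Bool by f(v) = true iff ∑_{i∈I} r_i · (if v i then 1 else 0) < k. If p : I →. Bool is a prime implicant of f (a partial valuation with minimal domain such that every total extension of p satisfies f), then for every i in the domain of p: if r_i < 0 then p(i) = true, and if r_i > 0 then p(i) = false. -/

import Mathlib

/-- A total valuation `v` extends the partial valuation `p`. -/
def ExtendsPV {I : Type*} (v : I → Bool) (p : I → Option Bool) : Prop :=
  ∀ i b, p i = some b → v i = b

/-- `q` is a restriction of `p` (defined on a subset of the domain of `p`, agreeing there). -/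
def RestrictsPV {I : Type*} (q p : I → Option Bool) : Prop :=
  ∀ i, q i = none ∨ q i = p i

/-- `p` is an implicant of `f`: every total extension of `p` satisfies `f`. -/
def IsImplicant {I : Type*} (f : (I → Bool) → Bool) (p : I → Option Bool) : Prop :=
  ∀ v, ExtendsPV v p → f v = true

/-- `p` is a prime implicant of `f`: an implicant with minimal domain (no proper
restriction is an implicant). -/
def IsPrimeImplicant {I : Type*} (f : (I → Bool) → Bool) (p : I → Option Bool) : Prop :=
  IsImplicant f p ∧ ∀ q, RestrictsPV q p → IsImplicant f q → q = p

theorem prime_implicant_sign {I : Type*} [Fintype I] (r : I → ℤ) (hr : ∀ i, r i ≠ 0)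
    (k : ℤ) (f : (I → Bool) → Bool)
    (hf : ∀ v, f v = true ↔ (∑ i, r i * (if v i then 1 else 0)) < k)
    (p : I → Option Bool) (hp : IsPrimeImplicant f p) :
    ∀ i b, p i = some b → (r i < 0 → b = true) ∧ (0 < r i → b = false) := by
  classical
  -- helper: if the contribution of `!b` is ≤ contribution of `b`, contradiction
  have helper : ∀ i b, p i = some b →
      r i * (if !b then 1 else 0) ≤ r i * (if b then 1 else 0) → False := by
    intro i b hpi hle
    set q : I → Option Bool := Function.update p i none with hq
    have hrestr : RestrictsPV q p := by
      intro j
      by_cases hj : j = i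
      · left; simp [hq, hj]
      · right; simp [hq, Function.update_of_ne hj]
    have himp : IsImplicant f q := by
      intro v hv
      by_cases hvi : v i = b
      · exact hp.1 v (by
          intro j c hjc
          by_cases hj : j = i
          · subst hj; rw [hpi] at hjc; injection hjc with h; rw [← h]; exact hvi
          · exact hv j c (by simp [hq, Function.update_of_ne hj, hjc]))
      · have hvi' : v i = !b := by
          cases b <;> cases hb : v i <;> simp_all
        set v' := Function.update v i b with hv'
        have hext : ExtendsPV v' p := by
          intro j c hjc
          by_cases hj : j = i
          · subst hj; rw [hpi] at hjc; injection hjc with h; simp [hv', ← h]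
          · have := hv j c (by simp [hq, Function.update_of_ne hj, hjc])
            simpa [hv', Function.update_of_ne hj] using this
        have hlt : (∑ j, r j * (if v' j then 1 else 0)) < k := (hf v').mp (hp.1 v' hext)
        have hsum : (∑ j, r j * (if v j then 1 else 0))
            ≤ (∑ j, r j * (if v' j then 1 else 0)) := by
          have e1 : (∑ j, r j * (if v j then 1 else 0))
              = r i * (if v i then 1 else 0)
                + ∑ j ∈ Finset.univ.erase i, r j * (if v j then 1 else 0) :=
            (Finset.add_sum_erase _ _ (Finset.mem_univ i)).symm
          have e2 : (∑ j, r j * (if v' j then 1 else 0))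
              = r i * (if v' i then 1 else 0)
                + ∑ j ∈ Finset.univ.erase i, r j * (if v' j then 1 else 0) :=
            (Finset.add_sum_erase _ _ (Finset.mem_univ i)).symm
          rw [e1, e2]
          have heq : ∑ j ∈ Finset.univ.erase i, r j * (if v j then 1 else 0)
              = ∑ j ∈ Finset.univ.erase i, r j * (if v' j then 1 else 0) := by
            apply Finset.sum_congr rfl
            intro j hj
            rw [hv', Function.update_of_ne (Finset.ne_of_mem_erase hj)]
          rw [heq]
          apply add_le_add_left
          simpa [hv', hvi'] using hle
        exact (hf v).mpr (lt_of_le_of_lt hsum hlt)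
    have := hp.2 q hrestr himp
    have : q i = p i := by rw [this]
    simp [hq, hpi] at this
  intro i b hpi
  constructor
  · intro hneg
    by_contra hb
    have hb' : b = false := by cases b <;> simp_all
    subst hb'
    exact helper i false hpi (by simpa using hneg.le)
  · intro hpos
    by_contra hb
    have hb' : b = true := by cases b <;> simp_all
    subst hb'
    exact helper i true hpi (by simpa using hpos.le)
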